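/- Let quantities α^A, α^B ∈ [0,1] and k^A, k^B ≥ 0 satisfy α^A ≤ α^B. Then (α^A k^A · α^B k^B)/(α^A k^A + α^B k^B) ≥ α^A · (k^A k^B)/(k^A + k^B), with the convention 0/0 = 0. Consequently, pointwise in y, the one-step (joint) Poisson-matching lower bound for Metropolis–Hastings coupling dominates the two-step bound: ∫ [α(x^A,y)k(y|x^A)·α(x^B,y)k(y|x^B)] / [α(x^A,y)k(y|x^A) + α(x^B,y)k(y|x^B)] dy ≥ ∫ min(α(x^A,y), α(x^B,y)) · [k(y|x^A)k(y|x^B)] / [k(y|x^A)+k(y|x^B)] dy. -/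
import Mathlib


open MeasureTheory

lemma key13 (aA aB cA cB : ℝ) (h0A : 0 ≤ aA) (hcA : 0 ≤ cA) (hcB : 0 ≤ cB)
    (hle : aA ≤ aB) :
    aA * (cA * cB) / (cA + cB) ≤ aA * cA * (aB * cB) / (aA * cA + aB * cB) := by
  rcases eq_or_lt_of_le h0A with h | h
  · simp [← h]
  rcases eq_or_lt_of_le hcA with h1 | h1
  · simp [← h1]
  rcases eq_or_lt_of_le hcB with h2 | h2
  · simp [← h2]
  have hB : 0 < aB := lt_of_lt_of_le h hle
  rw [div_le_div_iff₀ (by positivity) (by positivity)]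
  nlinarith [mul_nonneg (mul_nonneg h.le h1.le) (mul_nonneg h1.le (mul_nonneg h2.le (sub_nonneg.2 hle)))]

/-- Pointwise inequality (α^A k^A · α^B k^B)/(α^A k^A + α^B k^B) ≥
α^A (k^A k^B)/(k^A + k^B) for α^A ≤ α^B in [0,1] (with the 0/0 = 0 convention),
and consequently the one-step (joint) Poisson-matching lower bound for MH coupling
dominates the two-step bound, integrating over the proposal space. -/
theorem stmt13 {Y : Type*} [MeasurableSpace Y] (lam : Measure Y)
    (kA kB a b : Y → ℝ)
    (hkA : ∀ y, 0 ≤ kA y) (hkB : ∀ y, 0 ≤ kB y)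
    (ha : ∀ y, a y ∈ Set.Icc (0:ℝ) 1) (hb : ∀ y, b y ∈ Set.Icc (0:ℝ) 1)
    (hint1 : Integrable
      (fun y => a y * kA y * (b y * kB y) / (a y * kA y + b y * kB y)) lam)
    (hint2 : Integrable
      (fun y => min (a y) (b y) * (kA y * kB y) / (kA y + kB y)) lam) :
    (∀ (aA aB cA cB : ℝ), aA ∈ Set.Icc (0:ℝ) 1 → aB ∈ Set.Icc (0:ℝ) 1 →
      0 ≤ cA → 0 ≤ cB → aA ≤ aB →
      aA * (cA * cB) / (cA + cB) ≤ aA * cA * (aB * cB) / (aA * cA + aB * cB)) ∧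
    ∫ y, min (a y) (b y) * (kA y * kB y) / (kA y + kB y) ∂lam ≤
      ∫ y, a y * kA y * (b y * kB y) / (a y * kA y + b y * kB y) ∂lam := by
  constructor
  · intro aA aB cA cB hA hB hcA hcB hle
    exact key13 aA aB cA cB hA.1 hcA hcB hle
  · apply integral_mono hint2 hint1
    intro y
    rcases le_total (a y) (b y) with h | h
    · simpa [min_eq_left h] using
        key13 (a y) (b y) (kA y) (kB y) (ha y).1 (hkA y) (hkB y) h
    · have := key13 (b y) (a y) (kB y) (kA y) (hb y).1 (hkB y) (hkA y) h
      simp only [min_eq_right h]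
      calc b y * (kA y * kB y) / (kA y + kB y)
          = b y * (kB y * kA y) / (kB y + kA y) := by ring_nf
        _ ≤ b y * kB y * (a y * kA y) / (b y * kB y + a y * kA y) := this
        _ = a y * kA y * (b y * kB y) / (a y * kA y + b y * kB y) := by ring_nf
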